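/- If (A_n) is a sequence of events with P(A_n) → 0 and ∑_{n=1}^∞ P(A_n ∩ A_{n+1}^c) < ∞, then P(limsup A_n) = 0. -/

import Mathlib

open MeasureTheory Filter

theorem stmt0 {Ω : Type*} [MeasurableSpace Ω] (μ : Measure Ω) [IsProbabilityMeasure μ]
    (A : ℕ → Set Ω) (hmeas : ∀ n, MeasurableSet (A n))
    (h0 : Tendsto (fun n => μ (A n)) atTop (nhds 0))
    (hsum : ∑' n, μ (A n ∩ (A (n + 1))ᶜ) ≠ ⊤) :
    μ (limsup A atTop) = 0 := by
  have hBC : μ (limsup (fun n => A n ∩ (A (n + 1))ᶜ) atTop) = 0 :=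
    measure_limsup_atTop_eq_zero hsum
  have hliminf : μ (liminf A atTop) = 0 := by
    rw [liminf_eq_iSup_iInf_of_nat]
    refine measure_iUnion_null fun n => ?_
    have hle : ∀ m ≥ n, μ (⨅ i ≥ n, A i) ≤ μ (A m) := fun m hm =>
      measure_mono (by exact Set.iInter₂_subset m hm)
    have hz : μ (⨅ i ≥ n, A i) ≤ 0 :=
      ge_of_tendsto h0 (eventually_atTop.2 ⟨n, fun m hm => hle m hm⟩)
    exact le_antisymm hz zero_le
  have hsub : limsup A atTop ⊆ liminf A atTop ∪
      limsup (fun n => A n ∩ (A (n + 1))ᶜ) atTop := by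
    intro ω hω
    by_cases hlim : ω ∈ liminf A atTop
    · exact Or.inl hlim
    · refine Or.inr ?_
      rw [Filter.mem_limsup_iff_frequently_mem] at hω ⊢
      rw [Filter.mem_liminf_iff_eventually_mem] at hlim
      rw [Filter.not_eventually] at hlim
      rw [Filter.frequently_atTop] at hω hlim ⊢
      intro n
      obtain ⟨k, hk, hAk⟩ := hω n
      by_contra hcon
      push_neg at hcon
      have hall : ∀ j, k ≤ j → ω ∈ A j := by
        intro j hj
        induction j, hj using Nat.le_induction with
        | base => exact hAk
        | succ j hj ih =>
          by_contra hnot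
          exact hcon j (le_trans hk hj) ⟨ih, hnot⟩
      obtain ⟨m, hm, hAm⟩ := hlim k
      exact hAm (hall m hm)
  refine le_antisymm ?_ zero_le
  calc μ (limsup A atTop) ≤ μ (liminf A atTop ∪
      limsup (fun n => A n ∩ (A (n + 1))ᶜ) atTop) := measure_mono hsub
    _ ≤ μ (liminf A atTop) + μ (limsup (fun n => A n ∩ (A (n + 1))ᶜ) atTop) :=
      measure_union_le _ _
    _ ≤ 0 := by rw [hliminf, hBC, add_zero]
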